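/- Let p : E → B be a Hurewicz fibration admitting a continuous cross-section s : B → E with p ∘ s = id, and let p' : B → B' be any continuous surjection. Then TC(p') ≤ TC(p' ∘ p). In particular, taking p' = id_B, TC(B) ≤ TC(p). -/

import Mathlib

open Topology unitInterval

/-- Two maps `f g : A → B` are (freely) homotopic. -/
def MapsHomotopic {A B : Type*} [TopologicalSpace A] [TopologicalSpace B]
    (f g : A → B) : Prop :=
  ∃ H : A × unitInterval → B, Continuous H ∧ (∀ a, H (a, 0) = f a) ∧ (∀ a, H (a, 1) = g a)

/-- A continuous local section of `q` over the subset `U`. -/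
def HasLocalSection {E B : Type*} [TopologicalSpace E] [TopologicalSpace B]
    (q : E → B) (U : Set B) : Prop :=
  ∃ s : U → E, Continuous s ∧ ∀ u : U, q (s u) = (u : B)

/-- The sectional number `sec_op(q)`: the least `n` such that `B` is covered by `n`
open sets each admitting a continuous local section of `q`. -/
noncomputable def secOp {E B : Type*} [TopologicalSpace E] [TopologicalSpace B]
    (q : E → B) : ℕ∞ :=
  sInf ((fun n : ℕ => (n : ℕ∞)) '' {n : ℕ | ∃ U : Fin n → Set B,
    (∀ i, IsOpen (U i)) ∧ (⋃ i, U i) = Set.univ ∧ ∀ i, HasLocalSection q (U i)})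

/-- A homotopy local section of `q` over `U`: a continuous `s : U → E` with `q ∘ s`
homotopic to the inclusion. -/
def HasHtpyLocalSection {E B : Type*} [TopologicalSpace E] [TopologicalSpace B]
    (q : E → B) (U : Set B) : Prop :=
  ∃ s : U → E, Continuous s ∧ MapsHomotopic (fun u => q (s u)) (fun u : U => (u : B))

/-- The Schwarz genus of `q`. -/
noncomputable def schwarzGenus {E B : Type*} [TopologicalSpace E] [TopologicalSpace B]
    (q : E → B) : ℕ∞ :=
  sInf ((fun n : ℕ => (n : ℕ∞)) '' {n : ℕ | ∃ U : Fin n → Set B,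
    (∀ i, IsOpen (U i)) ∧ (⋃ i, U i) = Set.univ ∧ ∀ i, HasHtpyLocalSection q (U i)})

/-- Hurewicz fibration: homotopy lifting property with respect to all topological spaces. -/
def IsHurewiczFibration {E B : Type*} [TopologicalSpace E] [TopologicalSpace B]
    (p : E → B) : Prop :=
  ∀ (X : Type*) [TopologicalSpace X] (h : X → E) (H : X × unitInterval → B),
    Continuous h → Continuous H → (∀ x, H (x, 0) = p (h x)) →
      ∃ H' : X × unitInterval → E, Continuous H' ∧ (∀ y, p (H' y) = H y) ∧
        ∀ x, H' (x, 0) = h x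

/-- The topological complexity of a map `q : Y → Z`: the least `n` such that `Y × Z`
is covered by `n` open sets each admitting a continuous local section of
`e_q : PY → Y × Z`, `γ ↦ (γ(0), q(γ(1)))`. -/
noncomputable def topComplexity {Y Z : Type*} [TopologicalSpace Y] [TopologicalSpace Z]
    (q : Y → Z) : ℕ∞ :=
  sInf ((fun n : ℕ => (n : ℕ∞)) '' {n : ℕ | ∃ U : Fin n → Set (Y × Z),
    (∀ i, IsOpen (U i)) ∧ (⋃ i, U i) = Set.univ ∧
    ∀ i, ∃ s : U i → C(unitInterval, Y), Continuous s ∧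
      ∀ u : U i, ((s u) 0, q ((s u) 1)) = (u : Y × Z)})

/-- for a Hurewicz fibration `p` with a continuous cross-section and any
continuous surjection `p' : B → B'`, one has `TC(p') ≤ TC(p' ∘ p)`; in particular
`TC(B) ≤ TC(p)`. -/
theorem tc_aux {E B B'' : Type*} [TopologicalSpace E] [TopologicalSpace B]
    [TopologicalSpace B'']
    (p : E → B) (hp : Continuous p)
    (s : B → E) (hs : Continuous s) (hsec : ∀ b, p (s b) = b)
    (q : B → B'') :
    topComplexity q ≤ topComplexity (q ∘ p) := by
    apply sInf_le_sInf
    apply Set.image_mono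
    rintro n ⟨U, hUopen, hUcov, hUsec⟩
    refine ⟨fun i => (fun bc : B × B'' => ((s bc.1, bc.2) : E × B'')) ⁻¹' U i, ?_, ?_, ?_⟩
    · intro i
      exact (hUopen i).preimage ((hs.comp continuous_fst).prodMk continuous_snd)
    · ext bc
      simp only [Set.mem_iUnion, Set.mem_preimage, Set.mem_univ, iff_true]
      have : (s bc.1, bc.2) ∈ ⋃ i, U i := hUcov ▸ Set.mem_univ _
      simpa using this
    · intro i
      obtain ⟨sec, hsc, hss⟩ := hUsec i
      refine ⟨fun v => (⟨p, hp⟩ : C(E, B)).comp (sec ⟨(s v.1.1, v.1.2), v.2⟩), ?_, ?_⟩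
      · exact (ContinuousMap.continuous_postcomp _).comp (hsc.comp
          (Continuous.subtype_mk
            (((hs.comp (continuous_fst.comp continuous_subtype_val))).prodMk
              (continuous_snd.comp continuous_subtype_val)) _))
      · intro v
        have h := hss ⟨(s v.1.1, v.1.2), v.2⟩
        have h1 : sec ⟨(s v.1.1, v.1.2), v.2⟩ 0 = s v.1.1 := congrArg Prod.fst h
        have h2 : (q ∘ p) (sec ⟨(s v.1.1, v.1.2), v.2⟩ 1) = v.1.2 := congrArg Prod.snd h
        simp only [ContinuousMap.comp_apply, ContinuousMap.coe_mk]
        refine Prod.ext ?_ ?_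
        · simp [h1, hsec]
        · exact h2

theorem stmt13 {E B B' : Type*} [TopologicalSpace E] [TopologicalSpace B]
    [TopologicalSpace B']
    (p : E → B) (hp : Continuous p) (hfib : IsHurewiczFibration p)
    (s : B → E) (hs : Continuous s) (hsec : ∀ b, p (s b) = b)
    (p' : B → B') (hp' : Continuous p') (hp'surj : Function.Surjective p') :
    topComplexity p' ≤ topComplexity (p' ∘ p) ∧
      topComplexity (id : B → B) ≤ topComplexity p :=
  ⟨tc_aux p hp s hs hsec p',
   by simpa [Function.id_comp] using tc_aux p hp s hs hsec (id : B → B)⟩
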